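/- Let S = k[x₀,x₁,x₂,…,x_n], let I ⊆ S be a squarefree monomial ideal, and let J ⊆ S be its Alexander dual. Let S₁ = k[x,x₂,…,x_n] and π : S → S₁ the ring map with x₀,x₁ ↦ x and x_i ↦ x_i for i ≥ 2, and let J₁ ⊆ S₁ be the ideal generated by π(J). If x₁ − x₀ is a regular element (nonzerodivisor) on S/I, then J₁ is a squarefree monomial ideal. -/

import Mathlib

open MvPolynomial

/-- If `x₁ - x₀` is a regular element on `S/I` for a squarefree monomial ideal `I`, then
the image `J₁` of the Alexander dual `J` of `I` under `x₀,x₁ ↦ x` is a squarefree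
monomial ideal. -/
theorem alexander_dual_image_squarefree
    (k : Type*) [Field k] (n : ℕ) (hn : 1 ≤ n)
    (I : Ideal (MvPolynomial (Fin (n + 1)) k))
    (hIsqfree : ∃ G : Set (Fin (n + 1) →₀ ℕ), (∀ d ∈ G, ∀ v, d v ≤ 1) ∧
      I = Ideal.span ((fun d => monomial d (1 : k)) '' G))
    (J : Ideal (MvPolynomial (Fin (n + 1)) k))
    (hJ : J = Ideal.span { m : MvPolynomial (Fin (n + 1)) k |
      ∃ d : Fin (n + 1) →₀ ℕ,
        (∀ e : Fin (n + 1) →₀ ℕ, monomial e (1 : k) ∈ I →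
          ∃ v, v ∈ d.support ∧ v ∈ e.support) ∧
        m = monomial d (1 : k) })
    (g : Fin (n + 1) → Fin n)
    (hg : ∀ i : Fin (n + 1), (g i : ℕ) = if (i : ℕ) ≤ 1 then 0 else (i : ℕ) - 1)
    (hreg : ∀ f : MvPolynomial (Fin (n + 1)) k, (X 1 - X 0) * f ∈ I → f ∈ I) :
    ∃ G₁ : Set (Fin n →₀ ℕ), (∀ d ∈ G₁, ∀ v, d v ≤ 1) ∧
      Ideal.map (rename g) J = Ideal.span ((fun d => monomial d (1 : k)) '' G₁) := by
  classical
  obtain ⟨G, hGsq, hI⟩ := hIsqfree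
  -- indicator finsupp of a finset
  let ind : Finset (Fin (n + 1)) → (Fin (n + 1) →₀ ℕ) := fun D =>
    Finsupp.indicator D (fun _ _ => 1)
  have hind_apply : ∀ D i, ind D i = if i ∈ D then 1 else 0 := by
    intro D i; simp [ind, Finsupp.indicator_apply]
  have hind_supp : ∀ D, (ind D).support = D := by
    intro D; ext i; simp [Finsupp.mem_support_iff, hind_apply]
  have hind_sq : ∀ D v, ind D v ≤ 1 := by
    intro D v; rw [hind_apply]; split <;> omega
  -- covering predicate
  let Cov : Finset (Fin (n + 1)) → Prop := fun D => ∀ e ∈ G, ∃ v ∈ D, v ∈ e.support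
  have hCovMono : ∀ {D D'}, D ⊆ D' → Cov D → Cov D' := by
    intro D D' hsub h e he
    obtain ⟨v, hv1, hv2⟩ := h e he
    exact ⟨v, hsub hv1, hv2⟩
  -- membership of monomials in I
  have hmemI : ∀ d : Fin (n + 1) →₀ ℕ, monomial d (1 : k) ∈ I ↔ ∃ e ∈ G, e ≤ d := by
    intro d
    rw [hI, mem_ideal_span_monomial_image]
    constructor
    · intro h
      exact h d (by simp [support_monomial])
    · intro h xi hxi
      rw [support_monomial, if_neg one_ne_zero, Finset.mem_singleton] at hxi
      exact hxi ▸ h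
  -- covering condition of hJ vs Cov
  have hcov_iff : ∀ d : Fin (n + 1) →₀ ℕ,
      (∀ e, monomial e (1 : k) ∈ I → ∃ v, v ∈ d.support ∧ v ∈ e.support) ↔ Cov d.support := by
    intro d
    constructor
    · intro h e he
      obtain ⟨v, hv1, hv2⟩ := h e ((hmemI e).2 ⟨e, he, le_rfl⟩)
      exact ⟨v, hv1, hv2⟩
    · intro h e he
      obtain ⟨e', he'G, he'le⟩ := (hmemI e).1 he
      obtain ⟨v, hv1, hv2⟩ := h e' he'G
      exact ⟨v, hv1, Finsupp.support_mono he'le hv2⟩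
  -- injectivity of g away from {0,1}
  have hginj : ∀ S : Set (Fin (n + 1)),
      ¬((0 : Fin (n + 1)) ∈ S ∧ (1 : Fin (n + 1)) ∈ S) → Set.InjOn g S := by
    intro S hS a ha b hb hab
    have hval : (g a : ℕ) = (g b : ℕ) := by rw [hab]
    rw [hg a, hg b] at hval
    have h1 : ((1 : Fin (n + 1)) : ℕ) = 1 := by
      rw [Fin.val_one']; exact Nat.mod_eq_of_lt (by omega)
    have hcase : (a : ℕ) = (b : ℕ) ∨ ((a : ℕ) = 0 ∧ (b : ℕ) = 1) ∨
        ((a : ℕ) = 1 ∧ (b : ℕ) = 0) := by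
      split_ifs at hval <;> omega
    rcases hcase with h | h | h
    · exact Fin.ext h
    · exact absurd ⟨(Fin.ext (by simpa using h.1) : a = 0) ▸ ha,
        (Fin.ext (by rw [h1]; exact h.2) : b = 1) ▸ hb⟩ hS
    · exact absurd ⟨(Fin.ext (by simpa using h.2) : b = 0) ▸ hb,
        (Fin.ext (by rw [h1]; exact h.1) : a = 1) ▸ ha⟩ hS
  -- mapDomain of a squarefree finsupp with injective-on-support map is squarefree
  have hmapsq : ∀ d : Fin (n + 1) →₀ ℕ, (∀ v, d v ≤ 1) → Set.InjOn g d.support →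
      ∀ v, Finsupp.mapDomain g d v ≤ 1 := by
    intro d hd hinj v
    by_cases hv : v ∈ (Finsupp.mapDomain g d).support
    · obtain ⟨a, ha, rfl⟩ := Finset.mem_image.1 (Finsupp.mapDomain_support hv)
      rw [Finsupp.mapDomain_apply' (d.support : Set _) d subset_rfl hinj ha]
      exact hd a
    · simp [Finsupp.notMem_support_iff.1 hv]
  -- key combinatorial lemma via regularity
  have hkey : ∀ D : Finset (Fin (n + 1)), Cov D → (0 : Fin (n + 1)) ∈ D →
      (1 : Fin (n + 1)) ∈ D → Cov (D.erase 0) ∨ Cov (D.erase 1) := by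
    intro D hD h0 h1
    by_contra hcon
    push_neg at hcon
    obtain ⟨hc0, hc1⟩ := hcon
    obtain ⟨C, hCmem, hCmin⟩ := Finset.exists_minimal
      (s := (D.powerset).filter Cov) ⟨D, Finset.mem_filter.2 ⟨Finset.mem_powerset.2 subset_rfl, hD⟩⟩
    rw [Finset.mem_filter, Finset.mem_powerset] at hCmem
    obtain ⟨hCD, hCcov⟩ := hCmem
    have hmin : ∀ v ∈ C, ¬ Cov (C.erase v) := by
      intro v hv hcov'
      exact (Finset.ssubset_def.1 (Finset.erase_ssubset hv)).2 (hCmin (Finset.mem_filter.2 ⟨Finset.mem_powerset.2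
        ((Finset.erase_subset _ _).trans hCD), hcov'⟩) (Finset.ssubset_def.1 (Finset.erase_ssubset hv)).1)
    have h0C : (0 : Fin (n + 1)) ∈ C := by
      by_contra h
      exact hc0 (hCovMono (fun v hv => Finset.mem_erase.2
        ⟨fun hv0 => h (hv0 ▸ hv), hCD hv⟩) hCcov)
    have h1C : (1 : Fin (n + 1)) ∈ C := by
      by_contra h
      exact hc1 (hCovMono (fun v hv => Finset.mem_erase.2
        ⟨fun hv0 => h (hv0 ▸ hv), hCD hv⟩) hCcov)
    -- extract witnesses of minimality at 0 and 1
    have hwit : ∀ u ∈ C, ∃ e ∈ G, ∀ v ∈ C.erase u, v ∉ e.support := by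
      intro u hu
      have := hmin u hu
      simp only [Cov, not_forall] at this
      obtain ⟨e, heG, he⟩ := this
      refine ⟨e, heG, fun v hv hve => ?_⟩
      exact he ⟨v, hv, hve⟩
    obtain ⟨e0, he0G, he0⟩ := hwit 0 h0C
    obtain ⟨e1, he1G, he1⟩ := hwit 1 h1C
    -- complement of C
    set T : Finset (Fin (n + 1)) := Finset.univ \ C with hT
    have hle : ∀ u : Fin (n + 1), ∀ e, e ∈ G → (∀ v ∈ C.erase u, v ∉ e.support) →
        e ≤ Finsupp.single u 1 + ind T := by
      intro u e heG he
      rw [Finsupp.le_iff]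
      intro v hv
      have hesq := hGsq e heG v
      have hv' : v = u ∨ v ∉ C := by
        by_cases hvC : v ∈ C
        · by_cases hvu : v = u
          · exact Or.inl hvu
          · exact absurd hv (he v (Finset.mem_erase.2 ⟨hvu, hvC⟩))
        · exact Or.inr hvC
      rcases hv' with rfl | hv'
      · have hs : Finsupp.single v 1 v = 1 := Finsupp.single_eq_same
        simp only [Finsupp.add_apply, hs]
        omega
      · have : ind T v = 1 := by
          rw [hind_apply, if_pos (by simp [hT, hv'])]
        simp only [Finsupp.add_apply, this]
        omega
    have hx0 : X (0 : Fin (n + 1)) * monomial (ind T) (1 : k) ∈ I := by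
      rw [X, monomial_mul, one_mul]
      exact (hmemI _).2 ⟨e0, he0G, hle 0 e0 he0G he0⟩
    have hx1 : X (1 : Fin (n + 1)) * monomial (ind T) (1 : k) ∈ I := by
      rw [X, monomial_mul, one_mul]
      exact (hmemI _).2 ⟨e1, he1G, hle 1 e1 he1G he1⟩
    have hw : monomial (ind T) (1 : k) ∈ I := by
      apply hreg
      rw [sub_mul]
      exact sub_mem hx1 hx0
    obtain ⟨e, heG, hele⟩ := (hmemI _).1 hw
    obtain ⟨v, hvC, hve⟩ := hCcov e heG
    have : v ∈ T := by
      rw [← hind_supp T]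
      exact Finsupp.support_mono hele hve
    simp [hT] at this
    exact this hvC
  -- the target squarefree generating set
  refine ⟨{ d' : Fin n →₀ ℕ | (∀ v, d' v ≤ 1) ∧
    monomial d' (1 : k) ∈ Ideal.map (rename g) J }, fun d hd => hd.1, ?_⟩
  have hspan_le : Ideal.span ((fun d => monomial d (1 : k)) ''
      { d' : Fin n →₀ ℕ | (∀ v, d' v ≤ 1) ∧ monomial d' (1 : k) ∈ Ideal.map (rename g) J })
      ≤ Ideal.map (rename g) J := by
    apply Ideal.span_le.2
    rintro m ⟨d', ⟨hsq, hmem⟩, rfl⟩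
    exact hmem
  -- squarefree case
  have hsqcase : ∀ D : Finset (Fin (n + 1)), Cov D →
      ¬((0 : Fin (n + 1)) ∈ D ∧ (1 : Fin (n + 1)) ∈ D) →
      monomial (Finsupp.mapDomain g (ind D)) (1 : k) ∈
        Ideal.span ((fun d => monomial d (1 : k)) ''
          { d' : Fin n →₀ ℕ | (∀ v, d' v ≤ 1) ∧ monomial d' (1 : k) ∈ Ideal.map (rename g) J }) := by
    intro D hD hnot
    have hmemJ : monomial (ind D) (1 : k) ∈ J := by
      rw [hJ]
      exact Ideal.subset_span ⟨ind D, by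
        rw [hcov_iff, hind_supp]; exact hD, rfl⟩
    have hmemK : monomial (Finsupp.mapDomain g (ind D)) (1 : k) ∈ Ideal.map (rename g) J := by
      rw [← rename_monomial]
      exact Ideal.mem_map_of_mem _ hmemJ
    refine Ideal.subset_span ⟨Finsupp.mapDomain g (ind D), ⟨?_, hmemK⟩, rfl⟩
    refine hmapsq _ (hind_sq D) (hginj _ ?_)
    rw [hind_supp]
    exact_mod_cast hnot
  -- all covers
  have hcover : ∀ D : Finset (Fin (n + 1)), Cov D →
      monomial (Finsupp.mapDomain g (ind D)) (1 : k) ∈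
        Ideal.span ((fun d => monomial d (1 : k)) ''
          { d' : Fin n →₀ ℕ | (∀ v, d' v ≤ 1) ∧ monomial d' (1 : k) ∈ Ideal.map (rename g) J }) := by
    intro D hD
    by_cases hnot : (0 : Fin (n + 1)) ∈ D ∧ (1 : Fin (n + 1)) ∈ D
    · obtain ⟨h0, h1⟩ := hnot
      have hsplit : ∀ v : Fin (n + 1), v ∈ D → ind D = ind (D.erase v) + Finsupp.single v 1 := by
        intro v hv
        ext i
        by_cases hi : i = v
        · subst hi
          simp [hind_apply, hv, Finset.mem_erase]
        · simp [hind_apply, Finsupp.single_apply, hi, Finset.mem_erase,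
            Ne.symm hi]
      have hmuleq : ∀ (a b : Fin n →₀ ℕ),
          monomial (a + b) (1 : k) = monomial a 1 * monomial b 1 := by
        intro a b; rw [monomial_mul, one_mul]
      rcases hkey D hD h0 h1 with hcov' | hcov'
      · rw [hsplit 0 h0, Finsupp.mapDomain_add, hmuleq]
        exact Ideal.mul_mem_right _ _ (hsqcase _ hcov' (by simp))
      · rw [hsplit 1 h1, Finsupp.mapDomain_add, hmuleq]
        exact Ideal.mul_mem_right _ _ (hsqcase _ hcov' (by simp))
    · exact hsqcase D hD hnot
  refine le_antisymm ?_ hspan_le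
  conv_lhs => rw [hJ, Ideal.map_span]
  apply Ideal.span_le.2
  rintro m ⟨m', ⟨d, hdcov, rfl⟩, rfl⟩
  rw [rename_monomial]
  have hDcov : Cov d.support := (hcov_iff d).1 hdcov
  have hle : ind d.support ≤ d := by
    rw [Finsupp.le_iff]
    intro v hv
    rw [hind_supp] at hv
    rw [hind_apply, if_pos hv]
    exact Nat.one_le_iff_ne_zero.2 (Finsupp.mem_support_iff.1 hv)
  have hdec : d = ind d.support + (d - ind d.support) :=
    (add_tsub_cancel_of_le hle).symm
  have hmuleq : Finsupp.mapDomain g (ind d.support + (d - ind d.support)) =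
      Finsupp.mapDomain g (ind d.support) + Finsupp.mapDomain g (d - ind d.support) :=
    Finsupp.mapDomain_add
  rw [hdec, hmuleq]
  have : monomial (Finsupp.mapDomain g (ind d.support) + Finsupp.mapDomain g (d - ind d.support))
      (1 : k) = monomial (Finsupp.mapDomain g (ind d.support)) 1 *
      monomial (Finsupp.mapDomain g (d - ind d.support)) 1 := by
    rw [monomial_mul, one_mul]
  rw [this]
  exact Ideal.mul_mem_right _ _ (hcover _ hDcov)
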